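/- Let 0 < a < τ/√5, where τ = (1+√5)/2. Then ⋀⋆((−a,a)) + [0, τ³/(5a)] = ℝ; that is, for every real s there exist integers m, n with (mτ−n)/√5 ∈ (−a,a) and s − (n−mτ′)/√5 ∈ [0, τ³/(5a)]. -/

import Mathlib

noncomputable def tau : ℝ := (1 + Real.sqrt 5) / 2
noncomputable def tau' : ℝ := (1 - Real.sqrt 5) / 2

lemma sqrt5_sq : Real.sqrt 5 ^ 2 = 5 := Real.sq_sqrt (by norm_num)

lemma sqrt5_gt_two : 2 < Real.sqrt 5 := by
  nlinarith [sqrt5_sq, Real.sqrt_nonneg 5]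

lemma one_lt_tau : 1 < tau := by unfold tau; nlinarith [sqrt5_gt_two]

lemma tau_pos : 0 < tau := lt_trans one_pos one_lt_tau

lemma tau_sq : tau ^ 2 = tau + 1 := by
  unfold tau; nlinarith [sqrt5_sq]

lemma tau'_sq : tau' ^ 2 = tau' + 1 := by
  unfold tau'; nlinarith [sqrt5_sq]

lemma tau'_neg : tau' < 0 := by unfold tau'; nlinarith [sqrt5_gt_two]

lemma tau_inv : tau⁻¹ = tau - 1 :=
  inv_eq_of_mul_eq_one_right (by linear_combination tau_sq)

lemma tau'_inv : tau'⁻¹ = tau' - 1 :=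
  inv_eq_of_mul_eq_one_right (by linear_combination tau'_sq)

lemma abs_tau' : |tau'| = tau⁻¹ := by
  rw [abs_of_neg tau'_neg, tau_inv]
  unfold tau tau'; ring

lemma tau'_eq : tau' = 1 - tau := by unfold tau tau'; ring

lemma abs_tau'_zpow (j : ℤ) : |tau' ^ j| = tau ^ (-j) := by
  induction j using Int.induction_on with
  | zero => simp
  | succ i ih =>
    rw [zpow_add_one₀ (ne_of_lt tau'_neg), abs_mul, ih, abs_tau',
      show -((i : ℤ) + 1) = -(i : ℤ) - 1 by ring, zpow_sub_one₀ (ne_of_gt tau_pos)]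
  | pred i ih =>
    rw [zpow_sub_one₀ (ne_of_lt tau'_neg), abs_mul, abs_inv, ih, abs_tau',
      show -(-(i : ℤ) - 1) = -(-(i : ℤ)) + 1 by ring, zpow_add_one₀ (ne_of_gt tau_pos), inv_inv]

lemma rep_zpow (j : ℤ) : ∃ p q : ℤ, tau ^ j = p + q * tau ∧ tau' ^ j = p + q * tau' := by
  induction j using Int.induction_on with
  | zero => exact ⟨1, 0, by norm_num, by norm_num⟩
  | succ i ih =>
    obtain ⟨p, q, h1, h2⟩ := ih
    refine ⟨q, p + q, ?_, ?_⟩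
    · rw [zpow_add_one₀ (ne_of_gt tau_pos), h1]
      push_cast
      linear_combination (q : ℝ) * tau_sq
    · rw [zpow_add_one₀ (ne_of_lt tau'_neg), h2]
      push_cast
      linear_combination (q : ℝ) * tau'_sq
  | pred i ih =>
    obtain ⟨p, q, h1, h2⟩ := ih
    refine ⟨q - p, p, ?_, ?_⟩
    · rw [zpow_sub_one₀ (ne_of_gt tau_pos), h1, tau_inv]
      push_cast
      linear_combination (q : ℝ) * tau_sq
    · rw [zpow_sub_one₀ (ne_of_lt tau'_neg), h2, tau'_inv]
      push_cast
      linear_combination (q : ℝ) * tau'_sq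

lemma approx (k : ℤ) (n : ℕ) : ∀ t : ℝ, 0 ≤ t → t < tau ^ (k + (n : ℤ)) →
    ∃ p q : ℤ, t - tau ^ k ≤ (p : ℝ) + q * tau ∧ (p : ℝ) + q * tau ≤ t ∧
      |(p : ℝ) + q * tau'| ≤ tau ^ 2 * (tau ^ (-k) - tau ^ (-(k + (n : ℤ)))) := by
  induction n using Nat.strong_induction_on with
  | _ n ih =>
    intro t ht htn
    by_cases hcase : t < tau ^ k
    · refine ⟨0, 0, by simp; nlinarith [zpow_pos tau_pos k], by simpa using ht, ?_⟩
      simp only [Int.cast_zero, zero_add, zero_mul, abs_zero]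
      have h0 : tau ^ (-(k + (n:ℤ))) ≤ tau ^ (-k) :=
        zpow_le_zpow_right₀ (le_of_lt one_lt_tau) (by omega)
      nlinarith [sq_nonneg tau, h0]
    · push_neg at hcase
      have htpos : 0 < t := lt_of_lt_of_le (zpow_pos tau_pos k) hcase
      obtain ⟨j, hj1, hj2⟩ := exists_mem_Ico_zpow htpos one_lt_tau
      have hjk : k ≤ j := by
        by_contra h
        push_neg at h
        have : tau ^ (j + 1) ≤ tau ^ k := zpow_le_zpow_right₀ (le_of_lt one_lt_tau) (by omega)
        linarith
      have hjn : j + 1 ≤ k + n := by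
        by_contra h
        push_neg at h
        have : tau ^ (k + (n:ℤ)) ≤ tau ^ j := zpow_le_zpow_right₀ (le_of_lt one_lt_tau) (by omega)
        linarith
      have hn1 : 1 ≤ n := by omega
      set m : ℕ := (j - 1 - k).toNat with hm
      have hmn : m < n := by omega
      have hkm : k + (m : ℤ) ≤ j := by omega
      have hjkm : j - 1 ≤ k + (m : ℤ) := by omega
      have ht'0 : 0 ≤ t - tau ^ j := by linarith
      have ht' : t - tau ^ j < tau ^ (k + (m : ℤ)) := by
        have e1 : tau ^ (j + 1) = tau ^ j * tau := zpow_add_one₀ (ne_of_gt tau_pos) j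
        have e2 : tau ^ (j - 1) ≤ tau ^ (k + (m:ℤ)) :=
          zpow_le_zpow_right₀ (le_of_lt one_lt_tau) hjkm
        have e3 : tau ^ (j - 1) = tau ^ j * tau⁻¹ := zpow_sub_one₀ (ne_of_gt tau_pos) j
        rw [tau_inv] at e3
        nlinarith [zpow_pos tau_pos j]
      obtain ⟨p', q', h1, h2, h3⟩ := ih m hmn (t - tau ^ j) ht'0 ht'
      obtain ⟨pj, qj, hpj, hqj⟩ := rep_zpow j
      refine ⟨p' + pj, q' + qj, ?_, ?_, ?_⟩
      · push_cast
        rw [show ((p' : ℝ) + pj) + ((q' : ℝ) + qj) * tau = ((p' : ℝ) + q' * tau) + (pj + qj * tau) by ring, ← hpj]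
        linarith
      · push_cast
        rw [show ((p' : ℝ) + pj) + ((q' : ℝ) + qj) * tau = ((p' : ℝ) + q' * tau) + (pj + qj * tau) by ring, ← hpj]
        linarith
      · push_cast
        rw [show ((p' : ℝ) + pj) + ((q' : ℝ) + qj) * tau' = ((p' : ℝ) + q' * tau') + (pj + qj * tau') by ring, ← hqj]
        have habs : |((p' : ℝ) + q' * tau') + tau' ^ j| ≤ |(p' : ℝ) + q' * tau'| + |tau' ^ j| :=
          abs_add_le _ _
        have habs2 : |tau' ^ j| = tau ^ (-j) := abs_tau'_zpow j
        -- key inequality : tau ^ (-j) ≤ tau ^ 2 * (tau ^ (-(k+m)) - tau ^ (-(k+n)))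
        have hA : tau ^ (-j) ≤ tau ^ (-(k + (m:ℤ))) :=
          zpow_le_zpow_right₀ (le_of_lt one_lt_tau) (by omega)
        have hB : tau ^ (-(k + (n:ℤ))) ≤ tau ^ (-(j+1)) :=
          zpow_le_zpow_right₀ (le_of_lt one_lt_tau) (by omega)
        have hBe : tau ^ (-(j+1)) = tau ^ (-j) * (tau - 1) := by
          rw [show -(j+1) = -j - 1 by ring, zpow_sub_one₀ (ne_of_gt tau_pos), tau_inv]
        have hkey : tau ^ (-j) ≤ tau ^ 2 * (tau ^ (-(k + (m:ℤ))) - tau ^ (-(k + (n:ℤ)))) := by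
          rw [hBe] at hB
          have hA' : tau ^ 2 * tau ^ (-j) ≤ tau ^ 2 * tau ^ (-(k + (m:ℤ))) :=
            mul_le_mul_of_nonneg_left hA (sq_nonneg tau)
          have hB' : tau ^ 2 * tau ^ (-(k + (n:ℤ))) ≤ tau ^ 2 * (tau ^ (-j) * (tau - 1)) :=
            mul_le_mul_of_nonneg_left hB (sq_nonneg tau)
          have hd : tau ^ 2 * tau ^ (-j) - tau ^ 2 * (tau ^ (-j) * (tau - 1)) = tau ^ (-j) := by
            linear_combination tau ^ (-j) * (1 - tau) * tau_sq
          have he : tau ^ 2 * (tau ^ (-(k + (m:ℤ))) - tau ^ (-(k + (n:ℤ))))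
              = tau ^ 2 * tau ^ (-(k + (m:ℤ))) - tau ^ 2 * tau ^ (-(k + (n:ℤ))) := by ring
          linarith
        calc |((p' : ℝ) + q' * tau') + tau' ^ j|
            ≤ |(p' : ℝ) + q' * tau'| + tau ^ (-j) := by rw [← habs2]; exact habs
          _ ≤ tau ^ 2 * (tau ^ (-k) - tau ^ (-(k + (m:ℤ)))) + tau ^ 2 * (tau ^ (-(k + (m:ℤ))) - tau ^ (-(k + (n:ℤ)))) := by
              linarith
          _ = tau ^ 2 * (tau ^ (-k) - tau ^ (-(k + (n:ℤ)))) := by ring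

lemma approx' (k : ℤ) (T : ℝ) :
    ∃ p q : ℤ, T - tau ^ k ≤ (p : ℝ) + q * tau ∧ (p : ℝ) + q * tau ≤ T ∧
      |(p : ℝ) + q * tau'| ≤ tau ^ 2 * tau ^ (-k) := by
  have key : ∀ t : ℝ, 0 ≤ t → ∃ p q : ℤ, t - tau ^ k ≤ (p : ℝ) + q * tau ∧
      (p : ℝ) + q * tau ≤ t ∧ |(p : ℝ) + q * tau'| ≤ tau ^ 2 * tau ^ (-k) := by
    intro t ht
    obtain ⟨n, hn⟩ := pow_unbounded_of_one_lt (t * tau ^ (-k)) one_lt_tau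
    have htn : t < tau ^ (k + (n : ℤ)) := by
      have e1 : tau ^ (k + (n : ℤ)) = tau ^ k * tau ^ (n : ℤ) :=
        zpow_add₀ (ne_of_gt tau_pos) k n
      have e2 : (tau : ℝ) ^ (n : ℤ) = tau ^ n := zpow_natCast tau n
      have e3 : tau ^ (-k) * tau ^ k = 1 := by
        rw [← zpow_add₀ (ne_of_gt tau_pos)]; simp
      have hk : (0:ℝ) < tau ^ k := zpow_pos tau_pos k
      calc t = t * tau ^ (-k) * tau ^ k := by rw [mul_assoc, e3, mul_one]
        _ < tau ^ n * tau ^ k := by exact mul_lt_mul_of_pos_right hn hk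
        _ = tau ^ (k + (n : ℤ)) := by rw [e1, e2]; ring
    obtain ⟨p, q, h1, h2, h3⟩ := approx k n t ht htn
    refine ⟨p, q, h1, h2, le_trans h3 ?_⟩
    have : (0:ℝ) < tau ^ (-(k + (n:ℤ))) := zpow_pos tau_pos _
    nlinarith [sq_nonneg tau]
  rcases le_or_gt 0 T with hT | hT
  · exact key T hT
  · obtain ⟨p, q, h1, h2, h3⟩ := key (tau ^ k - T) (by nlinarith [zpow_pos tau_pos k])
    refine ⟨-p, -q, ?_, ?_, ?_⟩
    · push_cast; linarith
    · push_cast; linarith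
    · push_cast
      rw [show -(p:ℝ) + -(q:ℝ) * tau' = -((p:ℝ) + q * tau') by ring, abs_neg]
      exact h3

/-- For `0 < a < τ/√5`, one has `⋀⋆((−a,a)) + [0, τ³/(5a)] = ℝ`: for every real `s`
there exist integers `m, n` with `(mτ−n)/√5 ∈ (−a,a)` and
`s − (n−mτ′)/√5 ∈ [0, τ³/(5a)]`. -/
theorem model_set_star_relatively_dense (a : ℝ) (ha : 0 < a)
    (ha' : a < tau / Real.sqrt 5) (s : ℝ) :
    ∃ m n : ℤ,
      ((m : ℝ) * tau - n) / Real.sqrt 5 ∈ Set.Ioo (-a) a ∧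
      s - ((n : ℝ) - m * tau') / Real.sqrt 5 ∈ Set.Icc 0 (tau ^ 3 / (5 * a)) := by
  have hr : (0:ℝ) < Real.sqrt 5 := by nlinarith [sqrt5_gt_two]
  have har : (0:ℝ) < a * Real.sqrt 5 := mul_pos ha hr
  obtain ⟨k', hk1, hk2⟩ := exists_mem_Ico_zpow
    (div_pos (pow_pos tau_pos 2) har) one_lt_tau
  set k : ℤ := k' + 1 with hk
  have hk3 : tau ^ 2 / (a * Real.sqrt 5) < tau ^ k := hk2
  have hkU : tau ^ k ≤ tau ^ 3 / (a * Real.sqrt 5) := by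
    have e : tau ^ k = tau ^ k' * tau := zpow_add_one₀ (ne_of_gt tau_pos) k'
    rw [e]
    calc tau ^ k' * tau ≤ tau ^ 2 / (a * Real.sqrt 5) * tau :=
          mul_le_mul_of_nonneg_right hk1 (le_of_lt tau_pos)
      _ = tau ^ 3 / (a * Real.sqrt 5) := by ring
  obtain ⟨p, q, h1, h2, h3⟩ := approx' k (Real.sqrt 5 * s)
  have hkpos : (0:ℝ) < tau ^ k := zpow_pos tau_pos k
  have hy : |(p : ℝ) + q * tau'| < a * Real.sqrt 5 := by
    refine lt_of_le_of_lt h3 ?_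
    have e : tau ^ 2 * tau ^ (-k) = tau ^ 2 / tau ^ k := by
      rw [zpow_neg, div_eq_mul_inv]
    rw [e, div_lt_iff₀ hkpos]
    have := (div_lt_iff₀ har).mp hk3
    linarith
  have habs := abs_lt.mp hy
  refine ⟨q, p + q, ?_, ?_⟩
  · have hnum : (q : ℝ) * tau - ((p : ℝ) + (q : ℝ)) = -((p : ℝ) + q * tau') := by
      rw [tau'_eq]; ring
    constructor
    · rw [lt_div_iff₀ hr]
      push_cast
      nlinarith [habs.2]
    · rw [div_lt_iff₀ hr]
      push_cast
      nlinarith [habs.1]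
  · have hx : ((p : ℝ) + (q : ℝ)) - (q : ℝ) * tau' = (p : ℝ) + q * tau := by
      rw [tau'_eq]; ring
    have hkd : tau ^ k / Real.sqrt 5 ≤ tau ^ 3 / (5 * a) := by
      rw [div_le_div_iff₀ hr (by positivity)]
      have hkU' : tau ^ k * (a * Real.sqrt 5) ≤ tau ^ 3 := (le_div_iff₀ har).mp hkU
      have hm : tau ^ k * (a * Real.sqrt 5) * Real.sqrt 5 ≤ tau ^ 3 * Real.sqrt 5 :=
        mul_le_mul_of_nonneg_right hkU' (le_of_lt hr)
      have he : tau ^ k * (a * Real.sqrt 5) * Real.sqrt 5 = tau ^ k * (5 * a) := by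
        linear_combination (tau ^ k * a) * sqrt5_sq
      linarith
    constructor
    · rw [sub_nonneg, div_le_iff₀ hr]
      push_cast
      nlinarith [h2]
    · have hxd : s - tau ^ k / Real.sqrt 5 ≤ ((p : ℝ) + q * tau) / Real.sqrt 5 := by
        rw [le_div_iff₀ hr]
        have he : (s - tau ^ k / Real.sqrt 5) * Real.sqrt 5 = Real.sqrt 5 * s - tau ^ k := by
          field_simp
        rw [he]
        linarith
      push_cast
      rw [hx]
      linarith [hxd, hkd]
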